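/- Let n, k ≥ 1 be integers, let C : [n]^k → ℝ be a cost tensor, and let μ_1, …, μ_k ∈ Δ_n. Then there exists P in the transportation polytope M(μ_1,…,μ_k) that minimizes ⟨P, C⟩ := Σ_{j ∈ [n]^k} P_j C_j over M(μ_1,…,μ_k) and whose support {j ∈ [n]^k : P_j ≠ 0} has cardinality at most nk − k + 1. -/

import Mathlib

/-- The transportation polytope `M(μ_1, …, μ_k)`: entrywise nonnegative tensors
`P : [n]^k → ℝ` whose `i`-th marginal equals `μ i` for every `i`. -/
def transportPolytope (n k : ℕ) (μ : Fin k → Fin n → ℝ) :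
    Set ((Fin k → Fin n) → ℝ) :=
  {P | (∀ j, 0 ≤ P j) ∧
    ∀ (i : Fin k) (t : Fin n),
      ∑ j ∈ Finset.univ.filter (fun j : Fin k → Fin n => j i = t), P j = μ i t}

open Finset

/-- The marginal map as a linear map. -/
noncomputable def marg (n k : ℕ) : ((Fin k → Fin n) → ℝ) →ₗ[ℝ] (Fin k → Fin n → ℝ) where
  toFun P := fun i t => ∑ j ∈ univ.filter (fun j : Fin k → Fin n => j i = t), P j
  map_add' := by intros; funext i t; simp [Finset.sum_add_distrib]
  map_smul' := by intros; funext i t; simp [Finset.mul_sum]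

lemma marg_total (n k : ℕ) (P : (Fin k → Fin n) → ℝ) (i : Fin k) :
    ∑ t : Fin n, marg n k P i t = ∑ j, P j := by
  simpa [marg] using Finset.sum_fiberwise (univ : Finset (Fin k → Fin n))
    (fun j => j i) P

lemma marg_prod (n k : ℕ) (μ : Fin k → Fin n → ℝ)
    (hμ : ∀ i : Fin k, ∑ t : Fin n, μ i t = 1) (i : Fin k) (t : Fin n) :
    marg n k (fun j => ∏ i', μ i' (j i')) i t = μ i t := by
  classical
  have h1 : (univ.filter (fun j : Fin k → Fin n => j i = t)) =
      Fintype.piFinset (fun i' => if i' = i then {t} else univ) := by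
    ext j
    simp only [mem_filter, mem_univ, true_and, Fintype.mem_piFinset]
    constructor
    · intro h i'
      by_cases hi : i' = i <;> simp [hi, h]
    · intro h
      have := h i
      simpa using this
  change ∑ j ∈ univ.filter (fun j : Fin k → Fin n => j i = t),
      ∏ i', μ i' (j i') = μ i t
  rw [h1, ← Finset.prod_univ_sum]
  rw [Finset.prod_eq_single i]
  · simp
  · intro b _ hb
    simp [hb, hμ b]
  · simp

section
variable (n k : ℕ) (μ : Fin k → Fin n → ℝ)

lemma polytope_isClosed : IsClosed (transportPolytope n k μ) := by
  have e1 : {P : (Fin k → Fin n) → ℝ | ∀ j, 0 ≤ P j} = ⋂ j, {P | 0 ≤ P j} := by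
    ext P; simp [Set.mem_iInter]
  have h1 : IsClosed {P : (Fin k → Fin n) → ℝ | ∀ j, 0 ≤ P j} := by
    rw [e1]
    exact isClosed_iInter fun j => isClosed_le continuous_const (continuous_apply j)
  have e2 : {P : (Fin k → Fin n) → ℝ | ∀ (i : Fin k) (t : Fin n),
      ∑ j ∈ univ.filter (fun j : Fin k → Fin n => j i = t), P j = μ i t} =
      ⋂ (i : Fin k), ⋂ (t : Fin n),
        {P : (Fin k → Fin n) → ℝ |
          ∑ j ∈ univ.filter (fun j : Fin k → Fin n => j i = t), P j = μ i t} := by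
    ext P; simp [Set.mem_iInter]
  have h2 : IsClosed {P : (Fin k → Fin n) → ℝ | ∀ (i : Fin k) (t : Fin n),
      ∑ j ∈ univ.filter (fun j : Fin k → Fin n => j i = t), P j = μ i t} := by
    rw [e2]
    refine isClosed_iInter fun i => isClosed_iInter fun t => ?_
    exact isClosed_eq (continuous_finset_sum _ fun j _ => continuous_apply j) continuous_const
  exact (h1.inter h2)

lemma polytope_isCompact (hk : 1 ≤ k)
    (hμ : ∀ i : Fin k, (∀ t, 0 ≤ μ i t) ∧ ∑ t : Fin n, μ i t = 1) :
    IsCompact (transportPolytope n k μ) := by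
  have hsub : transportPolytope n k μ ⊆ Set.pi Set.univ (fun _ => Set.Icc (0:ℝ) 1) := by
    rintro P ⟨hP0, hPm⟩ j _
    refine ⟨hP0 j, ?_⟩
    set i0 : Fin k := ⟨0, hk⟩
    have h1 : P j ≤ ∑ j' ∈ univ.filter (fun j' : Fin k → Fin n => j' i0 = j i0), P j' := by
      refine Finset.single_le_sum (fun j' _ => hP0 j') ?_
      simp
    have h2 : μ i0 (j i0) ≤ 1 := by
      rw [← (hμ i0).2]
      exact Finset.single_le_sum (fun t _ => (hμ i0).1 t) (mem_univ _)
    calc P j ≤ μ i0 (j i0) := by rw [← hPm i0 (j i0)]; exact h1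
      _ ≤ 1 := h2
  exact (isCompact_univ_pi fun _ => isCompact_Icc).of_isClosed_subset
    (polytope_isClosed n k μ) hsub

lemma polytope_nonempty (hμ : ∀ i : Fin k, (∀ t, 0 ≤ μ i t) ∧ ∑ t : Fin n, μ i t = 1) :
    (transportPolytope n k μ).Nonempty := by
  refine ⟨fun j => ∏ i', μ i' (j i'), fun j => Finset.prod_nonneg fun i' _ => (hμ i').1 _, ?_⟩
  intro i t
  exact marg_prod n k μ (fun i => (hμ i).2) i t

end

noncomputable def psi (n k : ℕ) (hk : 1 ≤ k) :
    (Fin k → Fin n → ℝ) →ₗ[ℝ] ({i : Fin k // i ≠ ⟨0, hk⟩} → ℝ) where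
  toFun v := fun i => (∑ t, v i.1 t) - ∑ t, v ⟨0, hk⟩ t
  map_add' := by intros; funext i; simp [Finset.sum_add_distrib]; ring
  map_smul' := by intros; funext i; simp [Finset.mul_sum, mul_sub]

lemma psi_surjective (n k : ℕ) (hn : 1 ≤ n) (hk : 1 ≤ k) :
    Function.Surjective (psi n k hk) := by
  intro w
  refine ⟨fun i t => if h : i = (⟨0, hk⟩ : Fin k) then 0 else w ⟨i, h⟩ / n, ?_⟩
  funext i
  have hi : i.1 ≠ (⟨0, hk⟩ : Fin k) := i.2
  have hn0 : (n : ℝ) ≠ 0 := by positivity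
  simp only [psi, LinearMap.coe_mk, AddHom.coe_mk, hi, dif_neg, dif_pos]
  simp [Finset.sum_const, hi, hn0, mul_div_cancel₀]

lemma psi_marg (n k : ℕ) (hk : 1 ≤ k) (P : (Fin k → Fin n) → ℝ) :
    psi n k hk (marg n k P) = 0 := by
  funext i
  simp only [psi, LinearMap.coe_mk, AddHom.coe_mk, marg_total, Pi.zero_apply]
  ring

noncomputable def extZero (n k : ℕ) (s : Finset (Fin k → Fin n)) :
    (↥s → ℝ) →ₗ[ℝ] ((Fin k → Fin n) → ℝ) where
  toFun d := fun j => if h : j ∈ s then d ⟨j, h⟩ else 0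
  map_add' := by intros; funext j; by_cases h : j ∈ s <;> simp [h]
  map_smul' := by intros; funext j; by_cases h : j ∈ s <;> simp [h]

lemma exists_null_direction (n k : ℕ) (hn : 1 ≤ n) (hk : 1 ≤ k)
    (s : Finset (Fin k → Fin n)) (hs : n * k - k + 1 < s.card) :
    ∃ D : (Fin k → Fin n) → ℝ, D ≠ 0 ∧ (∀ j ∉ s, D j = 0) ∧ marg n k D = 0 := by
  classical
  set Ψ := psi n k hk
  have hcomp : ∀ d : ↥s → ℝ, marg n k (extZero n k s d) ∈ LinearMap.ker Ψ := fun d => psi_marg n k hk _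
  set f : (↥s → ℝ) →ₗ[ℝ] LinearMap.ker Ψ :=
    LinearMap.codRestrict (LinearMap.ker Ψ) ((marg n k).comp (extZero n k s)) hcomp
  -- finrank computations
  have hdom : Module.finrank ℝ (↥s → ℝ) = s.card := by
    rw [Module.finrank_fintype_fun_eq_card, Fintype.card_coe]
  have htot : Module.finrank ℝ (Fin k → Fin n → ℝ) = n * k := by
    simp [Module.finrank_pi_fintype, Module.finrank_fintype_fun_eq_card,
      Finset.sum_const, mul_comm]
  have hcod : Module.finrank ℝ ({i : Fin k // i ≠ ⟨0, hk⟩} → ℝ) = k - 1 := by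
    rw [Module.finrank_fintype_fun_eq_card]
    rw [Fintype.card_subtype_compl, Fintype.card_subtype_eq, Fintype.card_fin]
  have hrange : LinearMap.range Ψ = ⊤ := LinearMap.range_eq_top.2 (psi_surjective n k hn hk)
  have hrn := LinearMap.finrank_range_add_finrank_ker Ψ
  rw [hrange, finrank_top, htot, hcod] at hrn
  have hker : Module.finrank ℝ (LinearMap.ker Ψ) = n * k - k + 1 := by
    have hkle : k ≤ n * k := Nat.le_mul_of_pos_left k hn
    omega
  have hninj : ¬ Function.Injective f := by
    intro hinj
    have := LinearMap.finrank_le_finrank_of_injective hinj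
    rw [hdom, hker] at this
    omega
  rw [Function.not_injective_iff] at hninj
  obtain ⟨x, y, hfxy, hxy⟩ := hninj
  refine ⟨extZero n k s (x - y), ?_, ?_, ?_⟩
  · intro h0
    apply hxy
    funext j
    have := congrFun h0 j.1
    simpa [extZero, j.2, sub_eq_zero] using this
  · intro j hj
    simp [extZero, hj]
  · have : f (x - y) = 0 := by rw [map_sub, hfxy, sub_self]
    have h2 := congrArg (Subtype.val) this
    simpa [f, LinearMap.codRestrict] using h2

/-- There is a minimizer of `⟨P, C⟩` over the transportation polytope whose support
has at most `nk - k + 1` nonzero entries. -/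
theorem sparse_solutions_for_MOT (n k : ℕ) (hn : 1 ≤ n) (hk : 1 ≤ k)
    (C : (Fin k → Fin n) → ℝ) (μ : Fin k → Fin n → ℝ)
    (hμ : ∀ i : Fin k, (∀ t, 0 ≤ μ i t) ∧ ∑ t : Fin n, μ i t = 1) :
    ∃ P ∈ transportPolytope n k μ,
      (∀ Q ∈ transportPolytope n k μ, ∑ j, P j * C j ≤ ∑ j, Q j * C j) ∧
      Set.ncard {j : Fin k → Fin n | P j ≠ 0} ≤ n * k - k + 1 := by
  classical
  have hcpt := polytope_isCompact n k μ hk hμ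
  have hne := polytope_nonempty n k μ hμ
  set cost : ((Fin k → Fin n) → ℝ) → ℝ := fun P => ∑ j, P j * C j with hcost
  have hcont : ContinuousOn cost (transportPolytope n k μ) :=
    (continuous_finset_sum _ fun j _ => (continuous_apply j).mul continuous_const).continuousOn
  obtain ⟨P0, hP0mem, hP0min⟩ := hcpt.exists_isMinOn hne hcont
  set Mins : Set ((Fin k → Fin n) → ℝ) :=
    {P | P ∈ transportPolytope n k μ ∧ ∀ Q ∈ transportPolytope n k μ, cost P ≤ cost Q}
    with hMins
  have hMne : Mins.Nonempty := ⟨P0, hP0mem, fun Q hQ => hP0min hQ⟩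
  set A : Set ℕ :=
    {m | ∃ P ∈ Mins, (Finset.univ.filter (fun j : Fin k → Fin n => P j ≠ 0)).card = m}
    with hA
  obtain ⟨P1, hP1⟩ := hMne
  have hAne : A.Nonempty := ⟨_, P1, hP1, rfl⟩
  obtain ⟨P, hPM, hPcard⟩ := Nat.sInf_mem hAne
  obtain ⟨hPmem, hPmin⟩ := hPM
  set s := Finset.univ.filter (fun j : Fin k → Fin n => P j ≠ 0) with hsdef
  have key : s.card ≤ n * k - k + 1 := by
    by_contra hbig
    push_neg at hbig
    obtain ⟨D, hD0, hDsupp, hDmarg⟩ := exists_null_direction n k hn hk s hbig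
    -- choose sign so cost direction is nonpositive
    obtain ⟨E, hE0, hEsupp, hEmarg, hEcost⟩ :
        ∃ E : (Fin k → Fin n) → ℝ, E ≠ 0 ∧ (∀ j ∉ s, E j = 0) ∧ marg n k E = 0 ∧
          ∑ j, E j * C j ≤ 0 := by
      rcases le_or_gt (∑ j, D j * C j) 0 with h | h
      · exact ⟨D, hD0, hDsupp, hDmarg, h⟩
      · refine ⟨-D, neg_ne_zero.2 hD0, fun j hj => by simp [hDsupp j hj],
          by simp [hDmarg], ?_⟩
        have : ∑ j, (-D) j * C j = -∑ j, D j * C j := by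
          simp [neg_mul]
        rw [this]
        linarith
    have hmargE : ∀ (i : Fin k) (t : Fin n),
        ∑ j ∈ Finset.univ.filter (fun j : Fin k → Fin n => j i = t), E j = 0 := by
      intro i t
      have := congrFun (congrFun hEmarg i) t
      simpa [marg] using this
    have hEneg : ∃ j, E j < 0 := by
      by_contra hno
      push_neg at hno
      apply hE0
      have hsum : ∑ j, E j = 0 := by
        have h2 := marg_total n k E ⟨0, hk⟩
        rw [hEmarg] at h2
        simpa using h2.symm
      funext j
      exact (Finset.sum_eq_zero_iff_of_nonneg (fun j _ => hno j)).1 hsum j (Finset.mem_univ j)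
    set F := Finset.univ.filter (fun j : Fin k → Fin n => E j < 0) with hF
    have hFne : F.Nonempty := by
      obtain ⟨j, hj⟩ := hEneg
      exact ⟨j, by simp [hF, hj]⟩
    have hPpos : ∀ j ∈ F, 0 < P j := by
      intro j hj
      have hEj : E j < 0 := (Finset.mem_filter.1 hj).2
      have hjs : j ∈ s := by
        by_contra h
        exact absurd (hEsupp j h) (ne_of_lt hEj)
      have hPj : P j ≠ 0 := (Finset.mem_filter.1 hjs).2
      exact lt_of_le_of_ne (hPmem.1 j) (Ne.symm hPj)
    set tstar := F.inf' hFne (fun j => P j / (-E j)) with ht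
    have htpos : 0 < tstar := by
      rw [ht, Finset.lt_inf'_iff]
      intro j hj
      exact div_pos (hPpos j hj) (neg_pos.2 (Finset.mem_filter.1 hj).2)
    set P' : (Fin k → Fin n) → ℝ := fun j => P j + tstar * E j with hP'
    have hP'nonneg : ∀ j, 0 ≤ P' j := by
      intro j
      rcases lt_or_ge (E j) 0 with hEj | hEj
      · have hjF : j ∈ F := by simp [hF, hEj]
        have hle : tstar ≤ P j / (-E j) := Finset.inf'_le _ hjF
        have := (le_div_iff₀ (neg_pos.2 hEj)).1 hle
        simp only [hP']
        nlinarith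
      · have : 0 ≤ tstar * E j := mul_nonneg htpos.le hEj
        have := hPmem.1 j
        simp only [hP']
        linarith
    have hP'mem : P' ∈ transportPolytope n k μ := by
      refine ⟨hP'nonneg, fun i t => ?_⟩
      simp only [hP']
      rw [Finset.sum_add_distrib, hPmem.2 i t, ← Finset.mul_sum, hmargE i t, mul_zero, add_zero]
    have hcostP' : cost P' ≤ cost P := by
      have : cost P' = cost P + tstar * ∑ j, E j * C j := by
        simp only [hcost, hP', add_mul, Finset.sum_add_distrib, Finset.mul_sum, mul_assoc]
      rw [this]
      nlinarith
    have hP'min : ∀ Q ∈ transportPolytope n k μ, cost P' ≤ cost Q :=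
      fun Q hQ => le_trans hcostP' (hPmin Q hQ)
    have hP'Mins : P' ∈ Mins := ⟨hP'mem, hP'min⟩
    -- strict support decrease
    obtain ⟨j0, hj0F, hj0eq⟩ := Finset.exists_mem_eq_inf' hFne (fun j => P j / (-E j))
    have hEj0 : E j0 < 0 := (Finset.mem_filter.1 hj0F).2
    have hEj0' : E j0 ≠ 0 := ne_of_lt hEj0
    have hP'j0 : P' j0 = 0 := by
      simp only [hP', ht, hj0eq]
      field_simp
      ring
    have hsub : (Finset.univ.filter (fun j : Fin k → Fin n => P' j ≠ 0)) ⊆ s := by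
      intro j hj
      simp only [Finset.mem_filter, Finset.mem_univ, true_and] at hj
      simp only [hsdef, Finset.mem_filter, Finset.mem_univ, true_and]
      intro hPj
      apply hj
      have hjs : j ∉ s := by simp [hsdef, hPj]
      have : E j = 0 := hEsupp j hjs
      simp [hP', hPj, this]
    have hsubset : (Finset.univ.filter (fun j : Fin k → Fin n => P' j ≠ 0)) ⊂ s := by
      refine (Finset.ssubset_iff_of_subset hsub).2 ⟨j0, ?_, ?_⟩
      · simp only [hsdef, Finset.mem_filter, Finset.mem_univ, true_and]
        exact ne_of_gt (hPpos j0 hj0F)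
      · simp [hP'j0]
    have hlt : (Finset.univ.filter (fun j : Fin k → Fin n => P' j ≠ 0)).card < s.card :=
      Finset.card_lt_card hsubset
    have hin : (Finset.univ.filter (fun j : Fin k → Fin n => P' j ≠ 0)).card ∈ A :=
      ⟨P', hP'Mins, rfl⟩
    have := Nat.sInf_le hin
    omega
  refine ⟨P, hPmem, fun Q hQ => hPmin Q hQ, ?_⟩
  have hset : {j : Fin k → Fin n | P j ≠ 0} = ↑s := by
    ext j; simp [hsdef]
  rw [hset, Set.ncard_coe_finset]
  exact key
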